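/- Let L be a positive semi-definite linear functional on the algebra R generated by the fractional polynomials Qₙ (rational nonnegative exponents, n variables on [0,∞)ⁿ) and the function θ(t) = (1 + Σⱼ tⱼ² + Σₖ pₖ(t)²)^{-1}, where p₁, …, p_m ∈ Qₙ are real. Suppose μ is a positive Borel measure on [0,∞)ⁿ representing L, i.e., L(r) = ∫ r dμ for all r ∈ R. If in addition L(pₖ·|r|²) ≥ 0 for all r ∈ R and all k, and μ is obtained from the spectral measure construction so that each multiplication operator by pₖ has positive closure, then the support of μ is contained in ⋂ₖ pₖ^{-1}([0,∞)). Conversely, if supp μ ⊆ ⋂ₖ pₖ^{-1}([0,∞)), then L(pₖ·|r|²) ≥ 0 for all r ∈ R and all k. -/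

import Mathlib

open MeasureTheory
open scoped ComplexOrder

/-- Points of `[0,∞)ⁿ`. -/
abbrev NNVec (n : ℕ) := {t : Fin n → ℝ // ∀ j, 0 ≤ t j}

/-- The real fractional monomial `t ↦ t^α = t₁^{α₁} ⋯ tₙ^{αₙ}` on `[0,∞)ⁿ`
(real powers; the convention `0^0 = 1` is in force). -/
noncomputable def fracMonoR {n : ℕ} (α : Fin n → ℚ) (t : NNVec n) : ℝ :=
  ∏ j, (t.1 j) ^ ((α j : ℝ))

/-- The fractional monomial `t ↦ t^α`, regarded as a complex-valued function. -/
noncomputable def fracMono {n : ℕ} (α : Fin n → ℚ) (t : NNVec n) : ℂ :=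
  ((fracMonoR α t : ℝ) : ℂ)

/-- The set of fractional monomials with nonnegative rational exponents. -/
def fracMonoSet (n : ℕ) : Set (NNVec n → ℂ) :=
  {f | ∃ α : Fin n → ℚ, (∀ j, 0 ≤ α j) ∧ f = fracMono α}

/-- `Qₙ`: the complex algebra of "fractional polynomials" on `[0,∞)ⁿ`, i.e. the algebra
generated by the fractional monomials `t^α`, `α ∈ (ℚ₊)ⁿ`. -/
noncomputable def QAlg (n : ℕ) : Subalgebra ℂ (NNVec n → ℂ) :=
  Algebra.adjoin ℂ (fracMonoSet n)

/-- A real-valued function on `[0,∞)ⁿ` is a *real fractional polynomial* if, viewed as a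
complex-valued function, it belongs to `Qₙ`. -/
def IsRealFracPoly {n : ℕ} (p : NNVec n → ℝ) : Prop :=
  (fun t => ((p t : ℝ) : ℂ)) ∈ QAlg n

/-- `θ_p(t) = (1 + t₁² + ⋯ + tₙ² + p₁(t)² + ⋯ + p_m(t)²)⁻¹`. -/
noncomputable def thetaFn {n m : ℕ} (p : Fin m → (NNVec n → ℝ)) (t : NNVec n) : ℝ :=
  (1 + ∑ j, (t.1 j) ^ 2 + ∑ k, (p k t) ^ 2)⁻¹

/-- `R`: the complex algebra generated by `Qₙ` together with the function `θ_p`. -/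
noncomputable def RAlg (n m : ℕ) (p : Fin m → (NNVec n → ℝ)) : Subalgebra ℂ (NNVec n → ℂ) :=
  Algebra.adjoin ℂ (fracMonoSet n ∪ {fun t => ((thetaFn p t : ℝ) : ℂ)})

-- AUX

lemma continuous_of_mem_QAlg {n : ℕ} {f : NNVec n → ℂ} (hf : f ∈ QAlg n) : Continuous f := by
  induction hf using Algebra.adjoin_induction with
  | mem x hx =>
      obtain ⟨α, hα, rfl⟩ := hx
      have : Continuous (fracMonoR α) := by
        apply continuous_finset_prod
        intro j _
        exact (Real.continuous_rpow_const (by exact_mod_cast hα j)).comp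
          ((continuous_apply j).comp continuous_subtype_val)
      exact Complex.continuous_ofReal.comp this
  | algebraMap r => exact continuous_const
  | add x y _ _ hx hy => exact hx.add hy
  | mul x y _ _ hx hy => exact hx.mul hy

lemma continuous_realFracPoly {n : ℕ} {q : NNVec n → ℝ} (hq : IsRealFracPoly q) :
    Continuous q := by
  have h := continuous_of_mem_QAlg hq
  have : Continuous (fun t => ((q t : ℝ) : ℂ).re) := Complex.continuous_re.comp h
  simpa using this

lemma star_mem_RAlg {n m : ℕ} {p : Fin m → (NNVec n → ℝ)} {f : NNVec n → ℂ}
    (hf : f ∈ RAlg n m p) : star f ∈ RAlg n m p := by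
  induction hf using Algebra.adjoin_induction with
  | mem x hx =>
      have hxx : star x = x := by
        rcases hx with ⟨α, hα, rfl⟩ | hx
        · funext t
          simp [fracMono, Pi.star_apply, Complex.conj_ofReal]
        · simp only [Set.mem_singleton_iff] at hx; subst hx
          funext t
          simp [Pi.star_apply, Complex.conj_ofReal]
      rw [hxx]
      exact Algebra.subset_adjoin hx
  | algebraMap r =>
      have : star (algebraMap ℂ (NNVec n → ℂ) r) = algebraMap ℂ (NNVec n → ℂ) (starRingEnd ℂ r) := by
        funext t
        simp [Pi.star_apply, Pi.algebraMap_apply]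
      rw [this]
      exact Subalgebra.algebraMap_mem _ _
  | add x y _ _ hx hy => rw [star_add]; exact add_mem hx hy
  | mul x y _ _ hx hy => rw [star_mul]; exact mul_mem hy hx

section theta
variable {n m : ℕ} {p : Fin m → (NNVec n → ℝ)}

lemma one_le_S (t : NNVec n) :
    1 ≤ 1 + ∑ j, (t.1 j) ^ 2 + ∑ k, (p k t) ^ 2 := by
  have h1 : (0:ℝ) ≤ ∑ j, (t.1 j)^2 := Finset.sum_nonneg fun j _ => sq_nonneg _
  have h2 : (0:ℝ) ≤ ∑ k, (p k t)^2 := Finset.sum_nonneg fun k _ => sq_nonneg _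
  linarith

lemma thetaFn_pos (t : NNVec n) : 0 < thetaFn p t := by
  have := one_le_S (p := p) t
  unfold thetaFn
  positivity

lemma abs_h_le (k : Fin m) (t : NNVec n) : |p k t * thetaFn p t| ≤ 1/2 := by
  set S := 1 + ∑ j, (t.1 j) ^ 2 + ∑ k, (p k t) ^ 2 with hS
  have hS1 : 1 + (p k t)^2 ≤ S := by
    have h1 : (0:ℝ) ≤ ∑ j, (t.1 j)^2 := Finset.sum_nonneg fun j _ => sq_nonneg _
    have h2 : (p k t)^2 ≤ ∑ l, (p l t)^2 :=
      Finset.single_le_sum (fun l _ => sq_nonneg (p l t)) (Finset.mem_univ k)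
    simp only [hS]; linarith
  have hSpos : 0 < S := lt_of_lt_of_le one_pos (by nlinarith [sq_nonneg (p k t)])
  have hθ : thetaFn p t = S⁻¹ := rfl
  rw [hθ, abs_mul, abs_of_pos (inv_pos.2 hSpos), inv_eq_one_div, mul_one_div,
    div_le_div_iff₀ hSpos two_pos]
  nlinarith [sq_nonneg (|p k t| - 1), sq_abs (p k t)]

end theta

lemma integrable_real_of_ofReal {X : Type*} [MeasurableSpace X] {μ : Measure X}
    {g : X → ℝ} (h : Integrable (fun t => ((g t : ℝ) : ℂ)) μ) : Integrable g μ := by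
  have := h.re
  simpa using this

instance NNVec.instOpensMeasurableSpace (n : ℕ) : OpensMeasurableSpace (NNVec n) :=
  Subtype.opensMeasurableSpace {t : Fin n → ℝ | ∀ j, 0 ≤ t j}

/-- Let `L` be a positive semi-definite linear functional on the algebra `R`
generated by the fractional polynomials `Qₙ` and `θ(t) = (1 + Σⱼ tⱼ² + Σₖ pₖ(t)²)⁻¹`, where
`p₁, …, p_m ∈ Qₙ` are real, and let `μ` be a positive Borel measure on `[0,∞)ⁿ` representing
`L`, i.e. `L(r) = ∫ r dμ` for all `r ∈ R`.  Then `L(pₖ·|r|²) ≥ 0` for all `r ∈ R` and all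
`k` if and only if the support of `μ` is contained in `⋂ₖ pₖ⁻¹([0,∞))` (equivalently,
`μ({pₖ < 0}) = 0` for each `k`). -/
theorem support_in_semialgebraic_iff_positivity (n m : ℕ)
    (p : Fin m → (NNVec n → ℝ)) (hp : ∀ k, IsRealFracPoly (p k))
    (L : (NNVec n → ℂ) →ₗ[ℂ] ℂ)
    (hLpos : ∀ f ∈ RAlg n m p, 0 ≤ L (f * star f))
    (μ : Measure (NNVec n))
    (hint : ∀ f ∈ RAlg n m p, Integrable f μ)
    (hrep : ∀ f ∈ RAlg n m p, L f = ∫ t, f t ∂μ) :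
    (∀ k : Fin m, ∀ r ∈ RAlg n m p,
        0 ≤ L ((fun t => ((p k t : ℝ) : ℂ)) * r * star r)) ↔
    (∀ k : Fin m, μ {t : NNVec n | p k t < 0} = 0) := by
  have hθCmem : (fun t => ((thetaFn p t : ℝ) : ℂ)) ∈ RAlg n m p :=
    Algebra.subset_adjoin (Set.mem_union_right _ rfl)
  have hpCmem : ∀ k, (fun t => ((p k t : ℝ) : ℂ)) ∈ RAlg n m p := fun k =>
    Algebra.adjoin_mono Set.subset_union_left (hp k)
  constructor
  · -- forward direction
    intro hL k
    have hθpos : ∀ t, 0 < thetaFn p t := thetaFn_pos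
    have habs : ∀ t, |p k t * thetaFn p t| ≤ 1/2 := abs_h_le k
    -- measurability
    have hpmeas : Measurable (p k) := (continuous_realFracPoly (hp k)).measurable
    have hθcont : Continuous (thetaFn p) := by
      have hS : Continuous (fun t : NNVec n =>
          1 + ∑ j, (t.1 j) ^ 2 + ∑ l, (p l t) ^ 2) := by
        apply Continuous.add
        · apply Continuous.add continuous_const
          exact continuous_finset_sum _ fun j _ =>
            (((continuous_apply j).comp continuous_subtype_val).pow 2)
        · exact continuous_finset_sum _ fun l _ =>
            ((continuous_realFracPoly (hp l)).pow 2)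
      exact hS.inv₀ fun t => ne_of_gt (lt_of_lt_of_le one_pos (one_le_S t))
    have hθmeas : Measurable (thetaFn p) := hθcont.measurable
    -- θ integrable
    have hθint : Integrable (thetaFn p) μ :=
      integrable_real_of_ofReal (hint _ hθCmem)
    set T := ∫ t, thetaFn p t ∂μ with hT
    have hTnn : 0 ≤ T := integral_nonneg fun t => (hθpos t).le
    have key : ∀ ε : ℝ, 0 < ε → μ {t : NNVec n | p k t * thetaFn p t ≤ -ε} = 0 := by
      intro ε hε
      set A := {t : NNVec n | p k t * thetaFn p t ≤ -ε} with hA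
      have hAmeas : MeasurableSet A :=
        measurableSet_le (hpmeas.mul hθmeas) measurable_const
      set I := ∫ t in A, thetaFn p t ∂μ with hI
      have hInn : 0 ≤ I := setIntegral_nonneg hAmeas fun t _ => (hθpos t).le
      have hj : ∀ j : ℕ,
          ε * ((1/2+ε)^2)^j * I ≤ (1/2) * ((1/2:ℝ)^2)^j * T := by
        intro j
        set rR : NNVec n → ℝ :=
          fun t => (1/2 - p k t * thetaFn p t)^j * thetaFn p t with hrR
        -- complex membership
        set c : NNVec n → ℂ :=
          (algebraMap ℂ (NNVec n → ℂ) (1/2)) -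
            (fun t => ((p k t : ℝ) : ℂ)) * (fun t => ((thetaFn p t : ℝ) : ℂ)) with hc
        have hcmem : c ∈ RAlg n m p :=
          sub_mem (Subalgebra.algebraMap_mem _ _) (mul_mem (hpCmem k) hθCmem)
        set rC : NNVec n → ℂ := c^j * (fun t => ((thetaFn p t : ℝ) : ℂ)) with hrC
        have hrCmem : rC ∈ RAlg n m p := mul_mem (pow_mem hcmem j) hθCmem
        have hrCeq : rC = fun t => ((rR t : ℝ) : ℂ) := by
          funext t
          simp only [hrC, hc, Pi.mul_apply, Pi.pow_apply, Pi.sub_apply, hrR,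
            Pi.algebraMap_apply, Algebra.algebraMap_self, RingHom.id_apply]
          push_cast
          ring
        have hstar : star rC = rC := by
          rw [hrCeq]
          funext t
          simp [Pi.star_apply, Complex.conj_ofReal]
        have h0 := hL k rC hrCmem
        rw [hstar] at h0
        have hfmem : (fun t => ((p k t : ℝ) : ℂ)) * rC * rC ∈ RAlg n m p :=
          mul_mem (mul_mem (hpCmem k) hrCmem) hrCmem
        have hfeq : (fun t => ((p k t : ℝ) : ℂ)) * rC * rC
            = fun t => ((p k t * (rR t)^2 : ℝ) : ℂ) := by
          rw [hrCeq]
          funext t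
          simp only [Pi.mul_apply]
          push_cast
          ring
        have hfmem' : (fun t => ((p k t * (rR t)^2 : ℝ) : ℂ)) ∈ RAlg n m p :=
          hfeq ▸ hfmem
        have h0' : (0:ℂ) ≤ ((∫ t, p k t * (rR t)^2 ∂μ : ℝ) : ℂ) := by
          calc (0:ℂ) ≤ L ((fun t => ((p k t : ℝ) : ℂ)) * rC * rC) := h0
            _ = L (fun t => ((p k t * (rR t)^2 : ℝ) : ℂ)) := by rw [hfeq]
            _ = ∫ t, ((p k t * (rR t)^2 : ℝ) : ℂ) ∂μ := hrep _ hfmem'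
            _ = ((∫ t, p k t * (rR t)^2 ∂μ : ℝ) : ℂ) :=
              integral_ofReal (f := fun t => p k t * (rR t)^2)
        have hpos : 0 ≤ ∫ t, p k t * (rR t)^2 ∂μ := by
          rwa [Complex.zero_le_real] at h0'
        have hfint : Integrable (fun t => p k t * (rR t)^2) μ :=
          integrable_real_of_ofReal (hint _ hfmem')
        -- pointwise bounds
        have hb1 : ∀ t ∈ A, p k t * (rR t)^2
            ≤ (-ε * ((1/2+ε)^2)^j) * thetaFn p t := by
          intro t ht
          have hθ := hθpos t
          have hh : p k t * thetaFn p t ≤ -ε := ht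
          have h2 : (0:ℝ) ≤ 1/2 + ε := by linarith
          have hbase : ((1/2+ε:ℝ))^2 ≤ (1/2 - p k t * thetaFn p t)^2 :=
            pow_le_pow_left₀ h2 (by linarith) 2
          have h3 : (((1/2+ε:ℝ))^2)^j ≤ ((1/2 - p k t * thetaFn p t)^2)^j :=
            pow_le_pow_left₀ (by positivity) hbase j
          have hfr : p k t * (rR t)^2 =
              (p k t * thetaFn p t) * (((1/2 - p k t * thetaFn p t)^2)^j) * thetaFn p t := by
            simp only [hrR]
            rw [mul_pow, pow_right_comm]
            ring
          rw [hfr]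
          have hXnn : (0:ℝ) ≤ ((1/2 - p k t * thetaFn p t)^2)^j := by positivity
          have hYnn : (0:ℝ) ≤ (((1/2+ε):ℝ)^2)^j := by positivity
          calc (p k t * thetaFn p t) * (((1/2 - p k t * thetaFn p t)^2)^j) * thetaFn p t
              ≤ (-ε) * (((1/2 - p k t * thetaFn p t)^2)^j) * thetaFn p t := by
                apply mul_le_mul_of_nonneg_right _ hθ.le
                exact mul_le_mul_of_nonneg_right hh hXnn
            _ ≤ (-ε) * ((((1/2+ε):ℝ)^2)^j) * thetaFn p t := by
                apply mul_le_mul_of_nonneg_right _ hθ.le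
                nlinarith
            _ = (-ε * ((1/2+ε)^2)^j) * thetaFn p t := by ring
        have hb2 : ∀ t, p k t * (rR t)^2
            ≤ ((1/2) * ((1/2:ℝ)^2)^j) * thetaFn p t := by
          intro t
          have hθ := hθpos t
          have habs' := habs t
          have hfr : p k t * (rR t)^2 =
              (p k t * thetaFn p t) * (((1/2 - p k t * thetaFn p t)^2)^j) * thetaFn p t := by
            simp only [hrR]
            rw [mul_pow, pow_right_comm]
            ring
          rw [hfr]
          have hXnn : (0:ℝ) ≤ ((1/2 - p k t * thetaFn p t)^2)^j := by positivity
          rcases le_or_gt (p k t * thetaFn p t) 0 with hh | hh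
          · have hle : (p k t * thetaFn p t) * (((1/2 - p k t * thetaFn p t)^2)^j) ≤ 0 :=
              mul_nonpos_of_nonpos_of_nonneg hh hXnn
            have hrhs : (0:ℝ) ≤ (1/2) * (((1/2:ℝ))^2)^j := by positivity
            nlinarith
          · have h12 : p k t * thetaFn p t ≤ 1/2 := (abs_le.mp habs').2
            have hbase : (1/2 - p k t * thetaFn p t)^2 ≤ ((1/2:ℝ))^2 :=
              pow_le_pow_left₀ (by linarith) (by linarith) 2
            have hXle : ((1/2 - p k t * thetaFn p t)^2)^j ≤ (((1/2:ℝ))^2)^j :=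
              pow_le_pow_left₀ (by positivity) hbase j
            have hstep : (p k t * thetaFn p t) * (((1/2 - p k t * thetaFn p t)^2)^j)
                ≤ (1/2) * (((1/2:ℝ))^2)^j := by
              calc (p k t * thetaFn p t) * (((1/2 - p k t * thetaFn p t)^2)^j)
                  ≤ (1/2) * (((1/2 - p k t * thetaFn p t)^2)^j) :=
                    mul_le_mul_of_nonneg_right h12 hXnn
                _ ≤ (1/2) * (((1/2:ℝ))^2)^j := by linarith
            nlinarith
        -- integral chain
        have hθA : IntegrableOn (fun t => (-ε * ((1/2+ε)^2)^j) * thetaFn p t) A μ :=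
          (hθint.const_mul _).integrableOn
        have e1 : ∫ t in A, p k t * (rR t)^2 ∂μ
            ≤ ∫ t in A, (-ε * ((1/2+ε)^2)^j) * thetaFn p t ∂μ :=
          setIntegral_mono_on hfint.integrableOn hθA hAmeas hb1
        have e2 : ∫ t in Aᶜ, p k t * (rR t)^2 ∂μ
            ≤ ∫ t in Aᶜ, ((1/2) * ((1/2:ℝ)^2)^j) * thetaFn p t ∂μ :=
          setIntegral_mono_on hfint.integrableOn (hθint.const_mul _).integrableOn
            hAmeas.compl (fun t _ => hb2 t)
        have e3 : ∫ t in Aᶜ, ((1/2) * ((1/2:ℝ)^2)^j) * thetaFn p t ∂μ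
            ≤ ∫ t, ((1/2) * ((1/2:ℝ)^2)^j) * thetaFn p t ∂μ :=
          setIntegral_le_integral (hθint.const_mul _)
            (Filter.Eventually.of_forall fun t =>
              mul_nonneg (by positivity) (hθpos t).le)
        have e4 : ∫ t in A, (-ε * ((1/2+ε)^2)^j) * thetaFn p t ∂μ
            = (-ε * ((1/2+ε)^2)^j) * I := integral_const_mul _ _
        have e5 : ∫ t, ((1/2) * ((1/2:ℝ)^2)^j) * thetaFn p t ∂μ
            = ((1/2) * ((1/2:ℝ)^2)^j) * T := integral_const_mul _ _
        have hsplit : ∫ t, p k t * (rR t)^2 ∂μ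
            = (∫ t in A, p k t * (rR t)^2 ∂μ) + ∫ t in Aᶜ, p k t * (rR t)^2 ∂μ :=
          (integral_add_compl hAmeas hfint).symm
        rw [e4] at e1
        rw [e5] at e3
        linarith [hpos, hsplit, e1, e2, e3]
      -- limit argument
      have hq1 : ((1/2:ℝ)^2) / ((1/2+ε)^2) < 1 := by
        rw [div_lt_one (by positivity)]
        nlinarith
      have hqnn : (0:ℝ) ≤ ((1/2:ℝ)^2) / ((1/2+ε)^2) := by positivity
      have hC : ∀ j : ℕ, I ≤ ((1/2) * T / ε) * (((1/2:ℝ)^2 / ((1/2+ε)^2))^j) := by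
        intro j
        have h := hj j
        have haj : (0:ℝ) < ((1/2+ε)^2)^j := pow_pos (by positivity) j
        have h1 : I ≤ ((1/2) * ((1/2:ℝ)^2)^j * T) / (ε * ((1/2+ε)^2)^j) := by
          rw [le_div_iff₀ (by positivity)]
          nlinarith
        calc I ≤ ((1/2) * ((1/2:ℝ)^2)^j * T) / (ε * ((1/2+ε)^2)^j) := h1
          _ = ((1/2) * T / ε) * (((1/2:ℝ)^2 / ((1/2+ε)^2))^j) := by
            rw [div_pow]
            have hε0 : ε ≠ 0 := hε.ne'
            have ha0 : (((1/2:ℝ)+ε)^2)^j ≠ 0 := haj.ne'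
            field_simp
            rw [mul_assoc, ← mul_pow, mul_comm]
            congr 2
            have h2e : (1 + 2 * ε) ^ 2 ≠ 0 := by positivity
            field_simp
      have hlim : Filter.Tendsto
          (fun j : ℕ => ((1/2) * T / ε) * (((1/2:ℝ)^2 / ((1/2+ε)^2))^j))
          Filter.atTop (nhds 0) := by
        have := tendsto_pow_atTop_nhds_zero_of_lt_one hqnn hq1
        simpa using this.const_mul ((1/2) * T / ε)
      have hI0 : I ≤ 0 := ge_of_tendsto' hlim hC
      have hIeq : I = 0 := le_antisymm hI0 hInn
      -- conclude μ A = 0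
      have hae : thetaFn p =ᵐ[μ.restrict A] 0 :=
        (integral_eq_zero_iff_of_nonneg (fun t => (hθpos t).le)
          hθint.integrableOn).mp hIeq
      have h2 : μ.restrict A {t | thetaFn p t ≠ 0} = 0 := by
        rw [Filter.EventuallyEq, ae_iff] at hae
        simpa using hae
      have huniv : {t : NNVec n | thetaFn p t ≠ 0} = Set.univ :=
        Set.eq_univ_of_forall fun t => (hθpos t).ne'
      rw [huniv, Measure.restrict_apply_univ] at h2
      exact h2
    -- countable union
    have hsub : {t : NNVec n | p k t < 0}
        ⊆ ⋃ i : ℕ, {t : NNVec n | p k t * thetaFn p t ≤ -(1/(i+1))} := by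
      intro t ht
      have hh : p k t * thetaFn p t < 0 := mul_neg_of_neg_of_pos ht (hθpos t)
      obtain ⟨i, hi⟩ := exists_nat_one_div_lt (show (0:ℝ) < -(p k t * thetaFn p t) by linarith)
      exact Set.mem_iUnion.2 ⟨i, by simp only [Set.mem_setOf_eq]; linarith⟩
    exact measure_mono_null hsub
      (measure_iUnion_null fun i => key _ (by positivity))
  · -- converse direction
    intro hμ k r hr
    have hrmem : (fun t => ((p k t : ℝ) : ℂ)) * r * star r ∈ RAlg n m p :=
      mul_mem (mul_mem (hpCmem k) hr) (star_mem_RAlg hr)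
    have heq : (fun t => ((p k t : ℝ) : ℂ)) * r * star r
        = fun t => ((p k t * Complex.normSq (r t) : ℝ) : ℂ) := by
      funext t
      simp only [Pi.mul_apply, Pi.star_apply, Complex.ofReal_mul]
      rw [mul_assoc]
      congr 1
      exact Complex.mul_conj (r t)
    have hkey : L ((fun t => ((p k t : ℝ) : ℂ)) * r * star r)
        = ((∫ t, p k t * Complex.normSq (r t) ∂μ : ℝ) : ℂ) := by
      rw [heq, hrep _ (heq ▸ hrmem)]
      exact integral_ofReal
    rw [hkey, Complex.zero_le_real]
    apply integral_nonneg_of_ae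
    have h0 : ∀ᵐ t ∂μ, 0 ≤ p k t := by
      rw [ae_iff]
      simpa [not_le] using hμ k
    filter_upwards [h0] with t ht
    exact mul_nonneg ht (Complex.normSq_nonneg _)
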